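/- Let e₁,…,eₙ be the standard basis of ℂⁿ. Define E_j = e_j for 1 ≤ j ≤ n and E_{n+j} = Σ_{k=1}^n k^{j-1} e_k for 1 ≤ j ≤ n−1. Then for any indices 1 ≤ j₁ < j₂ < ⋯ < jₙ ≤ 2n−1, the set {E_{j₁}, …, E_{jₙ}} is linearly independent over ℂ. -/

import Mathlib

open Polynomial Finset

/-- Descartes-lite: a nonzero real polynomial has fewer distinct positive roots than
nonzero coefficients. -/
lemma descartes_aux : ∀ t : ℕ, ∀ p : ℝ[X], p ≠ 0 → p.support.card ≤ t →
    ∀ S : Finset ℝ, (∀ x ∈ S, 0 < x ∧ p.IsRoot x) → S.card < p.support.card := by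
  intro t
  induction t with
  | zero =>
    intro p hp hcard S hS
    exact absurd (Polynomial.support_eq_empty.mp (Finset.card_eq_zero.mp (Nat.le_zero.mp hcard))) hp
  | succ t ih =>
    intro p hp hcard S hS
    obtain ⟨q, hq⟩ : (X : ℝ[X]) ^ p.natTrailingDegree ∣ p :=
      X_pow_dvd_iff.mpr fun d hd => coeff_eq_zero_of_lt_natTrailingDegree hd
    set m := p.natTrailingDegree with hm
    have hq0 : q.coeff 0 ≠ 0 := by
      have h1 := Polynomial.coeff_natTrailingDegree_ne_zero.mpr hp
      have h2 : p.coeff m = q.coeff 0 := by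
        have := coeff_X_pow_mul q m 0
        rw [← hq] at this; simpa using this
      rwa [h2] at h1
    have hqne : q ≠ 0 := fun h => hq0 (by simp [h])
    have hsupp : q.support.card ≤ p.support.card := by
      apply Finset.card_le_card_of_injOn (· + m)
      · intro k hk
        simp only [Finset.mem_coe] at hk ⊢
        rw [Polynomial.mem_support_iff] at hk ⊢
        rwa [hq, coeff_X_pow_mul]
      · intro a _ b _ h; simp only at h; omega
    have hqroot : ∀ x ∈ S, q.IsRoot x := by
      intro x hx
      obtain ⟨hxpos, hxroot⟩ := hS x hx
      have : p.eval x = x ^ m * q.eval x := by rw [hq]; simp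
      rw [Polynomial.IsRoot, this] at hxroot
      rcases mul_eq_zero.mp hxroot with h | h
      · exact absurd h (pow_ne_zero _ (ne_of_gt hxpos))
      · exact h
    by_cases hq' : derivative q = 0
    · -- q is a nonzero constant, so S is empty
      have hqC : q = C (q.coeff 0) := Polynomial.eq_C_of_derivative_eq_zero hq'
      have hS0 : S = ∅ := by
        by_contra h
        obtain ⟨x, hx⟩ := Finset.nonempty_of_ne_empty h
        have := hqroot x hx
        rw [Polynomial.IsRoot, hqC] at this
        simp at this
        exact hq0 this
      rw [hS0]
      simpa [Finset.card_pos, Finset.nonempty_iff_ne_empty, Polynomial.support_eq_empty] using hp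
    · set T := (derivative q).roots.toFinset.filter (fun z => 0 < z) with hT
      have hinter : S.card ≤ (T \ S).card + 1 := by
        apply Finset.card_le_diff_of_interleaved
        intro x hx y hy hxy _
        obtain ⟨z, hz, hz'⟩ := exists_deriv_eq_zero hxy q.continuousOn
          (by rw [hqroot x hx, hqroot y hy])
        refine ⟨z, ?_, hz.1, hz.2⟩
        rw [hT, Finset.mem_filter, Multiset.mem_toFinset, Polynomial.mem_roots hq']
        refine ⟨?_, lt_trans (hS x hx).1 hz.1⟩
        rwa [Polynomial.IsRoot, ← Polynomial.deriv]
      have hds : (derivative q).support.card < q.support.card := by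
        have h0 : (0 : ℕ) ∈ q.support := Polynomial.mem_support_iff.mpr hq0
        have : (derivative q).support.card ≤ (q.support.erase 0).card := by
          apply Finset.card_le_card_of_injOn (· + 1)
          · intro k hk
            simp only [Finset.mem_coe] at hk ⊢
            rw [Polynomial.mem_support_iff, Polynomial.coeff_derivative] at hk
            rw [Finset.mem_erase, Polynomial.mem_support_iff]
            constructor
            · omega
            · intro h; rw [h, zero_mul] at hk; exact hk rfl
          · intro a _ b _ h; simp only at h; omega
        calc (derivative q).support.card ≤ (q.support.erase 0).card := this
          _ < q.support.card := Finset.card_erase_lt_of_mem h0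
      have hTcard : T.card < (derivative q).support.card := by
        apply ih (derivative q) hq' (by omega)
        intro z hz
        rw [hT, Finset.mem_filter, Multiset.mem_toFinset, Polynomial.mem_roots hq'] at hz
        exact ⟨hz.2, hz.1⟩
      calc S.card ≤ (T \ S).card + 1 := hinter
        _ ≤ T.card + 1 := by
            have := Finset.card_le_card (Finset.sdiff_subset (s := T) (t := S)); omega
        _ ≤ (derivative q).support.card := hTcard
        _ < q.support.card := hds
        _ ≤ p.support.card := hsupp

/-- Real monomial independence on enough positive points. -/
lemma keyR {ι : Type*} [DecidableEq ι] (B : Finset ι) (e : ι → ℕ) (he : Set.InjOn e B)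
    (c : ι → ℝ) (S : Finset ℝ) (hpos : ∀ x ∈ S, 0 < x) (hcard : B.card ≤ S.card)
    (hroot : ∀ x ∈ S, ∑ i ∈ B, c i * x ^ (e i) = 0) : ∀ i ∈ B, c i = 0 := by
  by_contra hcon
  push_neg at hcon
  obtain ⟨i0, hi0B, hi0⟩ := hcon
  set p : ℝ[X] := ∑ i ∈ B, C (c i) * X ^ (e i) with hp
  have hcoeff : ∀ j ∈ B, p.coeff (e j) = c j := by
    intro j hj
    rw [hp, Polynomial.finset_sum_coeff]
    rw [Finset.sum_eq_single j]
    · simp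
    · intro i hi hij
      have : e i ≠ e j := fun h => hij (he hi hj h)
      simp [Polynomial.coeff_C_mul, Polynomial.coeff_X_pow, this, Ne.symm this]
    · intro h; exact absurd hj h
  have hpne : p ≠ 0 := fun h => hi0 (by rw [← hcoeff i0 hi0B, h, Polynomial.coeff_zero])
  have hsupp : p.support ⊆ B.image e := by
    intro k hk
    rw [Polynomial.mem_support_iff] at hk
    by_contra hkim
    apply hk
    rw [hp, Polynomial.finset_sum_coeff]
    apply Finset.sum_eq_zero
    intro i hi
    have : e i ≠ k := fun h => hkim (Finset.mem_image.mpr ⟨i, hi, h⟩)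
    simp [Polynomial.coeff_C_mul, Polynomial.coeff_X_pow, this, Ne.symm this]
  have := descartes_aux p.support.card p hpne le_rfl S ?_
  · have h1 : p.support.card ≤ B.card :=
      le_trans (Finset.card_le_card hsupp) Finset.card_image_le
    omega
  · intro x hx
    refine ⟨hpos x hx, ?_⟩
    rw [Polynomial.IsRoot, hp]
    rw [Polynomial.eval_finset_sum]
    simpa using hroot x hx

/-- Complex monomial independence on enough positive points. -/
lemma keyC {ι : Type*} [DecidableEq ι] (B : Finset ι) (e : ι → ℕ) (he : Set.InjOn e B)
    (g : ι → ℂ) (S : Finset ℝ) (hpos : ∀ x ∈ S, 0 < x) (hcard : B.card ≤ S.card)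
    (hroot : ∀ x ∈ S, ∑ i ∈ B, g i * (x : ℂ) ^ (e i) = 0) : ∀ i ∈ B, g i = 0 := by
  have hre : ∀ i ∈ B, (g i).re = 0 := by
    apply keyR B e he _ S hpos hcard
    intro x hx
    have := congrArg Complex.re (hroot x hx)
    rw [Complex.re_sum] at this
    simpa [← Complex.ofReal_pow] using this
  have him : ∀ i ∈ B, (g i).im = 0 := by
    apply keyR B e he _ S hpos hcard
    intro x hx
    have := congrArg Complex.im (hroot x hx)
    rw [Complex.im_sum] at this
    simpa [← Complex.ofReal_pow] using this
  intro i hi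
  exact Complex.ext (hre i hi) (him i hi)

/-- The vectors `E_j`: for `j < n`, the standard basis vector `e_j`, and for
`n ≤ j ≤ 2n-2`, the vector whose `k`-th coordinate (1-based `k`) is `k^(j-n)`. -/
noncomputable def Evec (n : ℕ) : Fin (2 * n - 1) → Fin n → ℂ := fun j k =>
  if (j : ℕ) < n then (if (j : ℕ) = (k : ℕ) then 1 else 0)
  else ((k : ℕ) + 1 : ℂ) ^ ((j : ℕ) - n)

/-- Any `n` of the `2n-1` vectors `E_j` are linearly independent over `ℂ`. -/
theorem hankel_stmt1 (n : ℕ) (s : Fin n → Fin (2 * n - 1)) (hs : StrictMono s) :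
    LinearIndependent ℂ (fun i => Evec n (s i)) := by
  classical
  rw [Fintype.linearIndependent_iff]
  intro g hg
  have hg' : ∀ k : Fin n, ∑ i, g i * Evec n (s i) k = 0 := by
    intro k
    have := congrFun hg k
    simpa [Finset.sum_apply] using this
  set A := Finset.univ.filter (fun i : Fin n => (s i : ℕ) < n) with hA
  set B := Finset.univ.filter (fun i : Fin n => ¬ (s i : ℕ) < n) with hB
  have hsplit : ∀ f : Fin n → ℂ, ∑ i, f i = ∑ i ∈ A, f i + ∑ i ∈ B, f i := fun f =>
    (Finset.sum_filter_add_sum_filter_not Finset.univ _ f).symm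
  have hsinj : Function.Injective (fun i : Fin n => (s i : ℕ)) := by
    intro a b h
    exact hs.injective (Fin.val_injective h)
  set T := A.image (fun i => (s i : ℕ)) with hT
  have hTsub : T ⊆ Finset.range n := by
    intro k hk
    rw [hT, Finset.mem_image] at hk
    obtain ⟨i, hi, rfl⟩ := hk
    rw [hA, Finset.mem_filter] at hi
    exact Finset.mem_range.mpr hi.2
  have hTcard : T.card = A.card := Finset.card_image_of_injOn (fun a _ b _ h => hsinj h)
  set K := Finset.range n \ T with hK
  have hABcard : A.card + B.card = n := by
    rw [hA, hB]
    have h := Finset.card_filter_add_card_filter_not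
      (s := (Finset.univ : Finset (Fin n))) (p := fun i : Fin n => (s i : ℕ) < n)
    rwa [Finset.card_univ, Fintype.card_fin] at h
  have hKcard : K.card = B.card := by
    rw [hK, Finset.card_sdiff_of_subset hTsub, Finset.card_range, hTcard]; omega
  set S := K.image (fun k : ℕ => (k + 1 : ℝ)) with hSdef
  have hScard : S.card = K.card := Finset.card_image_of_injOn (by
    intro a _ b _ h
    simp only at h
    have hab : (a : ℝ) = (b : ℝ) := by linarith
    exact_mod_cast hab)
  have step1 : ∀ i ∈ B, g i = 0 := by
    apply keyC B (fun i => (s i : ℕ) - n) ?_ g S ?_ (by omega) ?_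
    · intro a ha b hb h
      rw [hB, Finset.coe_filter] at ha hb
      simp only [Set.mem_setOf_eq] at ha hb
      apply hsinj
      simp only at h ⊢
      omega
    · intro x hx
      rw [hSdef, Finset.mem_image] at hx
      obtain ⟨k, _, rfl⟩ := hx
      positivity
    · intro x hx
      rw [hSdef, Finset.mem_image] at hx
      obtain ⟨k, hkK, rfl⟩ := hx
      rw [hK, Finset.mem_sdiff, Finset.mem_range] at hkK
      obtain ⟨hkn, hkT⟩ := hkK
      have heq := hg' ⟨k, hkn⟩
      rw [hsplit] at heq
      have hAzero : ∑ i ∈ A, g i * Evec n (s i) ⟨k, hkn⟩ = 0 := by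
        apply Finset.sum_eq_zero
        intro i hi
        rw [hA, Finset.mem_filter] at hi
        have hne : (s i : ℕ) ≠ k := fun h =>
          hkT (by rw [hT]; exact Finset.mem_image.mpr ⟨i, by rw [hA, Finset.mem_filter]; exact hi, h⟩)
        simp [Evec, hi.2, hne]
      rw [hAzero, zero_add] at heq
      rw [← heq]
      apply Finset.sum_congr rfl
      intro i hi
      rw [hB, Finset.mem_filter] at hi
      have : ¬ (s i : ℕ) < n := hi.2
      simp only [Evec, this, if_false]
      push_cast
      ring
  intro i
  by_cases hi : (s i : ℕ) < n
  · have heq := hg' ⟨(s i : ℕ), hi⟩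
    rw [hsplit] at heq
    have hBzero : ∑ j ∈ B, g j * Evec n (s j) ⟨(s i : ℕ), hi⟩ = 0 :=
      Finset.sum_eq_zero fun j hj => by rw [step1 j hj, zero_mul]
    have hAval : ∑ j ∈ A, g j * Evec n (s j) ⟨(s i : ℕ), hi⟩ = g i := by
      rw [Finset.sum_eq_single_of_mem i (by rw [hA, Finset.mem_filter]; exact ⟨Finset.mem_univ _, hi⟩)]
      · simp [Evec, hi]
      · intro j hj hji
        rw [hA, Finset.mem_filter] at hj
        have h2 : (s j : ℕ) ≠ (s i : ℕ) := fun h => hji (hsinj h)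
        simp [Evec, hj.2, h2]
    rw [hAval, hBzero, add_zero] at heq
    exact heq
  · exact step1 i (by rw [hB, Finset.mem_filter]; exact ⟨Finset.mem_univ _, hi⟩)
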